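/- (Theorem 7) Let h and k be coprime odd positive integers and let p ≥ 1 be an integer. Then k^p Σ_{u=0}^{k−1} (−1)^{u−⌊hu/k⌋} Σ_{s=0}^{p} C(p,s) h^s E_s(u/k) E_{p−s}(h − ⌊hu/k⌋) = Σ_{s=0}^{p} C(p,s) (hk)^{p−s} E_s E_{p−s}(1), where E_s(x) is the s-th Euler polynomial, E_s = E_s(0) the s-th Euler number, and ⌊·⌋ the floor function. -/

import Mathlib

open Finset

def eulerNumber : ℕ → ℚ
  | 0 => 1
  | n + 1 => -(∑ l : Fin (n + 1), ((n + 1).choose l : ℚ) * eulerNumber l) / 2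

noncomputable def eulerPoly (n : ℕ) (x : ℝ) : ℝ :=
  ∑ l ∈ Finset.range (n + 1), (n.choose l : ℝ) * (eulerNumber l : ℝ) * x ^ (n - l)

noncomputable def Ere (l : ℕ) : ℝ := ((eulerNumber l : ℚ) : ℝ)

lemma Ere_zero : Ere 0 = 1 := by norm_num [Ere, eulerNumber]

lemma euler_rec (n : ℕ) (hn : 1 ≤ n) :
    ∑ l ∈ range (n + 1), (n.choose l : ℚ) * eulerNumber l = -eulerNumber n := by
  cases n with
  | zero => omega
  | succ m =>
    have hdef : eulerNumber (m + 1)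
        = -(∑ l : Fin (m + 1), ((m + 1).choose l : ℚ) * eulerNumber l) / 2 := by
        conv_lhs => rw [eulerNumber]
    rw [Fin.sum_univ_eq_sum_range (fun l => ((m + 1).choose l : ℚ) * eulerNumber l)] at hdef
    have h2 : ∑ l ∈ range (m + 1), ((m + 1).choose l : ℚ) * eulerNumber l
        = -2 * eulerNumber (m + 1) := by
      rw [hdef]; ring
    rw [Finset.sum_range_succ, h2, Nat.choose_self]
    ring

lemma euler_rec' (r : ℕ) (hr : 1 ≤ r) :
    ∑ l ∈ range (r + 1), (r.choose l : ℝ) * Ere l = -Ere r := by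
  have h := euler_rec r hr
  have h2 := congrArg (fun q : ℚ => (q : ℝ)) h
  push_cast at h2
  simpa [Ere] using h2

noncomputable def Phi (c : ℕ → ℝ) (n : ℕ) (x : ℝ) : ℝ :=
  ∑ m ∈ range (n + 1), (n.choose m : ℝ) * c m * x ^ (n - m)

lemma eulerPoly_eq_Phi (n : ℕ) (x : ℝ) : eulerPoly n x = Phi Ere n x := rfl

lemma choose_tri (n l m : ℕ) (hl : l ≤ n) (hm : m ≤ n) :
    n.choose l * (n - l).choose m = n.choose m * (n - m).choose l := by
  rcases le_or_gt (l + m) n with hlm | hlm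
  · have h1 := Nat.choose_mul (n := n) (k := l + m) (s := l) (Nat.le_add_right l m)
    have h2 := Nat.choose_mul (n := n) (k := l + m) (s := m) (Nat.le_add_left m l)
    have h3 : (l + m).choose l = (l + m).choose m := by
      rw [← Nat.choose_symm (Nat.le_add_right l m)]
      congr 1
      omega
    rw [Nat.add_sub_cancel_left] at h1
    rw [Nat.add_sub_cancel] at h2
    rw [← h1, ← h2, h3]
  · have hz1 : (n - l).choose m = 0 := Nat.choose_eq_zero_of_lt (by omega)
    have hz2 : (n - m).choose l = 0 := Nat.choose_eq_zero_of_lt (by omega)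
    simp [hz1, hz2]

lemma Phi_scale (c : ℕ → ℝ) (n : ℕ) {K : ℝ} (hK : K ≠ 0) (x : ℝ) :
    K ^ n * Phi c n (x / K) = Phi (fun m => c m * K ^ m) n x := by
  unfold Phi
  rw [Finset.mul_sum]
  refine Finset.sum_congr rfl fun m hm => ?_
  have hmn : m ≤ n := Nat.lt_succ_iff.mp (Finset.mem_range.mp hm)
  have hKn : K ^ n = K ^ m * K ^ (n - m) := by rw [← pow_add]; congr 1; omega
  rw [hKn, div_pow]
  have hKnm : K ^ (n - m) ≠ 0 := pow_ne_zero _ hK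
  field_simp

/-- The Euler function `Ē_p(x) = (-1)^⌊x⌋ E_p(x - ⌊x⌋)`. -/
noncomputable def eulerFun (p : ℕ) (x : ℝ) : ℝ := (-1 : ℝ) ^ ⌊x⌋ * eulerPoly p (x - ⌊x⌋)

/-- The Dedekind-type DC sum `T_p(h,k) = 2 ∑_{u=1}^{k-1} (-1)^{u-1} (u/k) Ē_p(hu/k)`. -/
noncomputable def dcSum (p h k : ℕ) : ℝ :=
  2 * ∑ u ∈ Finset.Ico 1 k, (-1 : ℝ) ^ (u - 1) * ((u : ℝ) / k) * eulerFun p (h * u / k)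


lemma Phi_FE (n : ℕ) (x : ℝ) : Phi Ere n (x + 1) + Phi Ere n x = 2 * x ^ n := by
  have hL : Phi Ere n (x + 1)
      = ∑ l ∈ range (n + 1), ∑ i ∈ range (n + 1),
          (n.choose l : ℝ) * Ere l * (((n - l).choose i : ℝ) * x ^ i) := by
    unfold Phi
    refine Finset.sum_congr rfl fun l hl => ?_
    have hln : l ≤ n := Nat.lt_succ_iff.mp (Finset.mem_range.mp hl)
    rw [add_pow]
    simp only [one_pow]
    rw [Finset.mul_sum]
    refine Finset.sum_subset (Finset.range_subset_range.mpr (Nat.succ_le_succ (Nat.sub_le n l))) ?_ |>.trans ?_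
    · intro i hi hni
      have : (n - l).choose i = 0 := by
        refine Nat.choose_eq_zero_of_lt ?_
        simp only [Finset.mem_range] at hi hni
        omega
      simp [this]
    · refine Finset.sum_congr rfl fun i hi => ?_
      ring
  have hR : Phi Ere n x = ∑ i ∈ range (n + 1), (n.choose i : ℝ) * Ere (n - i) * x ^ i := by
    unfold Phi
    rw [← Finset.sum_range_reflect (fun l => (n.choose l : ℝ) * Ere l * x ^ (n - l)) (n + 1)]
    refine Finset.sum_congr rfl fun i hi => ?_
    have hin : i ≤ n := Nat.lt_succ_iff.mp (Finset.mem_range.mp hi)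
    simp only [Nat.add_sub_cancel]
    rw [Nat.choose_symm hin, Nat.sub_sub_self hin]
  rw [hL, hR, Finset.sum_comm, ← Finset.sum_add_distrib]
  have key : ∀ i ∈ range (n + 1),
      (∑ l ∈ range (n + 1), (n.choose l : ℝ) * Ere l * (((n - l).choose i : ℝ) * x ^ i))
        + (n.choose i : ℝ) * Ere (n - i) * x ^ i
      = (if i = n then 2 * x ^ n else 0) := by
    intro i hi
    have hin : i ≤ n := Nat.lt_succ_iff.mp (Finset.mem_range.mp hi)
    have hsum : ∑ l ∈ range (n + 1), (n.choose l : ℝ) * Ere l * (((n - l).choose i : ℝ) * x ^ i)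
        = (n.choose i : ℝ) * (∑ l ∈ range (n - i + 1), ((n - i).choose l : ℝ) * Ere l) * x ^ i := by
      have e1 : ∀ l ∈ range (n + 1),
          (n.choose l : ℝ) * Ere l * (((n - l).choose i : ℝ) * x ^ i)
          = (n.choose i : ℝ) * (((n - i).choose l : ℝ) * Ere l) * x ^ i := by
        intro l hl
        have hln : l ≤ n := Nat.lt_succ_iff.mp (Finset.mem_range.mp hl)
        have hc := choose_tri n l i hln hin
        have hc' : (n.choose l : ℝ) * ((n - l).choose i : ℝ)
            = (n.choose i : ℝ) * ((n - i).choose l : ℝ) := by exact_mod_cast hc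
        linear_combination (Ere l * x ^ i) * hc'
      rw [Finset.sum_congr rfl e1, ← Finset.sum_mul, ← Finset.mul_sum]
      congr 2
      refine (Finset.sum_subset (Finset.range_subset_range.mpr (by omega)) fun l hl hnl => ?_).symm
      have : (n - i).choose l = 0 := by
        refine Nat.choose_eq_zero_of_lt ?_
        simp only [Finset.mem_range] at hl hnl
        omega
      simp [this]
    rw [hsum]
    by_cases hieq : i = n
    · subst hieq
      simp [Ere_zero]
      ring
    · have h1 : 1 ≤ n - i := by omega
      rw [euler_rec' (n - i) h1, if_neg hieq]
      ring
  rw [Finset.sum_congr rfl key, Finset.sum_ite_eq' (range (n + 1)) n (fun _ => 2 * x ^ n)]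
  simp

lemma stageB (q : ℕ) (b : ℕ → ℝ) (X Y : ℝ) :
    ∑ i ∈ range (q + 1), (q.choose i : ℝ) * X ^ i * Phi b (q - i) Y = Phi b q (X + Y) := by
  have hL : ∑ i ∈ range (q + 1), (q.choose i : ℝ) * X ^ i * Phi b (q - i) Y
      = ∑ i ∈ range (q + 1), ∑ m ∈ range (q + 1),
          (q.choose m : ℝ) * b m * (((q - m).choose i : ℝ) * X ^ i * Y ^ (q - m - i)) := by
    refine Finset.sum_congr rfl fun i hi => ?_
    have hiq : i ≤ q := Nat.lt_succ_iff.mp (Finset.mem_range.mp hi)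
    unfold Phi
    rw [Finset.mul_sum]
    refine Finset.sum_subset (Finset.range_subset_range.mpr (Nat.succ_le_succ (Nat.sub_le q i))) ?_
      |>.trans ?_
    · intro m hm hnm
      have : (q - i).choose m = 0 := by
        refine Nat.choose_eq_zero_of_lt ?_
        simp only [Finset.mem_range] at hm hnm
        omega
      simp [this]
    · refine Finset.sum_congr rfl fun m hm => ?_
      have hmq : m ≤ q := Nat.lt_succ_iff.mp (Finset.mem_range.mp hm)
      have hc := choose_tri q i m hiq hmq
      have hc' : (q.choose i : ℝ) * ((q - i).choose m : ℝ)
          = (q.choose m : ℝ) * ((q - m).choose i : ℝ) := by exact_mod_cast hc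
      have hexp : q - i - m = q - m - i := by omega
      rw [hexp]
      linear_combination (X ^ i * Y ^ (q - m - i) * b m) * hc'
  rw [hL, Finset.sum_comm]
  unfold Phi
  refine Finset.sum_congr rfl fun m hm => ?_
  have hmq : m ≤ q := Nat.lt_succ_iff.mp (Finset.mem_range.mp hm)
  rw [add_pow, Finset.mul_sum]
  refine Eq.symm ?_
  refine Finset.sum_subset (Finset.range_subset_range.mpr (Nat.succ_le_succ (Nat.sub_le q m))) ?_
    |>.trans ?_
  · intro i hi hni
    have : (q - m).choose i = 0 := by
      refine Nat.choose_eq_zero_of_lt ?_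
      simp only [Finset.mem_range] at hi hni
      omega
    simp [this]
  · refine Finset.sum_congr rfl fun i hi => ?_
    ring

lemma appell_conv (p : ℕ) (a b : ℕ → ℝ) (X Y : ℝ) :
    ∑ s ∈ range (p + 1), (p.choose s : ℝ) * Phi a s X * Phi b (p - s) Y
      = ∑ l ∈ range (p + 1), (p.choose l : ℝ) * a l * Phi b (p - l) (X + Y) := by
  have hL : ∑ s ∈ range (p + 1), (p.choose s : ℝ) * Phi a s X * Phi b (p - s) Y
      = ∑ s ∈ range (p + 1), ∑ l ∈ range (p + 1),
          (p.choose s : ℝ) * ((s.choose l : ℝ) * a l * X ^ (s - l)) * Phi b (p - s) Y := by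
    refine Finset.sum_congr rfl fun s hs => ?_
    have hsp : s ≤ p := Nat.lt_succ_iff.mp (Finset.mem_range.mp hs)
    conv_lhs => rw [Phi]
    rw [Finset.mul_sum, Finset.sum_mul]
    refine Finset.sum_subset (Finset.range_subset_range.mpr (Nat.succ_le_succ hsp)) ?_
    intro l hl hnl
    have : s.choose l = 0 := by
      refine Nat.choose_eq_zero_of_lt ?_
      simp only [Finset.mem_range] at hl hnl
      omega
    simp [this]
  rw [hL, Finset.sum_comm]
  refine Finset.sum_congr rfl fun l hl => ?_
  have hlp : l ≤ p := Nat.lt_succ_iff.mp (Finset.mem_range.mp hl)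
  have hzero : ∀ s ∈ range (p + 1), s ∉ Finset.Ico l (p + 1) →
      (p.choose s : ℝ) * ((s.choose l : ℝ) * a l * X ^ (s - l)) * Phi b (p - s) Y = 0 := by
    intro s hs hns
    simp only [Finset.mem_range, Finset.mem_Ico] at hs hns
    have : s.choose l = 0 := Nat.choose_eq_zero_of_lt (by omega)
    simp [this]
  have hIco : ∑ s ∈ range (p + 1),
        (p.choose s : ℝ) * ((s.choose l : ℝ) * a l * X ^ (s - l)) * Phi b (p - s) Y
      = ∑ s ∈ Finset.Ico l (p + 1),
        (p.choose s : ℝ) * ((s.choose l : ℝ) * a l * X ^ (s - l)) * Phi b (p - s) Y := by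
    refine (Finset.sum_subset ?_ hzero).symm
    intro s hs
    simp only [Finset.mem_Ico] at hs
    simp only [Finset.mem_range]
    omega
  rw [hIco, Finset.sum_Ico_eq_sum_range]
  have hrange : p + 1 - l = (p - l) + 1 := by omega
  rw [hrange]
  rw [show Phi b (p - l) (X + Y) = ∑ i ∈ range ((p - l) + 1),
        ((p - l).choose i : ℝ) * X ^ i * Phi b ((p - l) - i) Y from (stageB (p - l) b X Y).symm]
  rw [Finset.mul_sum]
  refine Finset.sum_congr rfl fun i hi => ?_
  have hip : i ≤ p - l := Nat.lt_succ_iff.mp (Finset.mem_range.mp hi)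
  have hch := Nat.choose_mul (n := p) (k := l + i) (s := l) (Nat.le_add_right l i)
  rw [Nat.add_sub_cancel_left] at hch
  have hch' : (p.choose (l + i) : ℝ) * ((l + i).choose l : ℝ)
      = (p.choose l : ℝ) * ((p - l).choose i : ℝ) := by exact_mod_cast hch
  have h1 : l + i - l = i := by omega
  have h2 : p - (l + i) = p - l - i := by omega
  rw [h1, h2]
  linear_combination (a l * X ^ i * Phi b (p - l - i) Y) * hch'

noncomputable def EP (n : ℕ) : Polynomial ℝ :=
  ∑ l ∈ range (n + 1), Polynomial.C ((n.choose l : ℝ) * Ere l) * Polynomial.X ^ (n - l)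

lemma EP_eval (n : ℕ) (x : ℝ) : (EP n).eval x = Phi Ere n x := by
  unfold EP Phi
  rw [Polynomial.eval_finset_sum]
  refine Finset.sum_congr rfl fun l hl => ?_
  simp [mul_assoc]

noncomputable def BPoly (k n : ℕ) : Polynomial ℝ :=
  ∑ v ∈ range k, Polynomial.C ((-1 : ℝ) ^ v * (k : ℝ) ^ n) *
    (EP n).comp (Polynomial.C ((k : ℝ)⁻¹) * (Polynomial.X + Polynomial.C (v : ℝ)))

lemma BPoly_eval (k n : ℕ) (x : ℝ) :
    (BPoly k n).eval x
      = ∑ v ∈ range k, (-1 : ℝ) ^ v * ((k : ℝ) ^ n * Phi Ere n ((x + v) / k)) := by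
  unfold BPoly
  rw [Polynomial.eval_finset_sum]
  refine Finset.sum_congr rfl fun v hv => ?_
  rw [Polynomial.eval_mul, Polynomial.eval_comp]
  simp only [Polynomial.eval_mul, Polynomial.eval_add, Polynomial.eval_C, Polynomial.eval_X]
  rw [EP_eval]
  rw [inv_mul_eq_div]
  ring

lemma BPoly_FE (k n : ℕ) (hk : 0 < k) (hkodd : Odd k) (x : ℝ) :
    (BPoly k n).eval (x + 1) + (BPoly k n).eval x = 2 * x ^ n := by
  have hk0 : (k : ℝ) ≠ 0 := Nat.cast_ne_zero.mpr hk.ne'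
  rw [BPoly_eval, BPoly_eval]
  set g : ℕ → ℝ := fun v => (-1 : ℝ) ^ v * ((k : ℝ) ^ n * Phi Ere n ((x + v) / k)) with hg
  have h1 : ∑ v ∈ range k, (-1 : ℝ) ^ v * ((k : ℝ) ^ n * Phi Ere n ((x + 1 + v) / k))
      = -∑ v ∈ range k, g (v + 1) := by
    rw [← Finset.sum_neg_distrib]
    refine Finset.sum_congr rfl fun v hv => ?_
    have harg : (x + 1 + v) / k = (x + (v + 1 : ℕ)) / k := by push_cast; ring
    rw [harg, hg]
    push_cast
    ring
  have h2 : ∑ v ∈ range k, g (v + 1) = (∑ v ∈ range (k + 1), g v) - g 0 := by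
    rw [Finset.sum_range_succ' g k]
    ring
  have h3 : ∑ v ∈ range k, g v = (∑ v ∈ range (k + 1), g v) - g k := by
    rw [Finset.sum_range_succ g k]
    ring
  rw [h1, h2, h3]
  have hg0 : g 0 = (k : ℝ) ^ n * Phi Ere n (x / k) := by simp [hg]
  have hgk : g k = -((k : ℝ) ^ n * Phi Ere n (x / k + 1)) := by
    simp only [hg]
    have : (x + k) / k = x / k + 1 := by field_simp
    rw [this, hkodd.neg_one_pow]
    ring
  rw [hg0, hgk]
  have hFE := Phi_FE n (x / k)
  have hpow : (k : ℝ) ^ n * (x / k) ^ n = x ^ n := by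
    rw [div_pow, mul_div_cancel₀]
    exact pow_ne_zero _ hk0
  linear_combination ((k : ℝ) ^ n) * hFE + 2 * hpow

lemma mult_thm (k n : ℕ) (hk : 0 < k) (hkodd : Odd k) (x : ℝ) :
    ∑ v ∈ range k, (-1 : ℝ) ^ v * ((k : ℝ) ^ n * Phi Ere n ((x + v) / k)) = Phi Ere n x := by
  set d : Polynomial ℝ := BPoly k n - EP n with hd
  have hpt : ∀ y : ℝ, d.eval (y + 1) = -d.eval y := by
    intro y
    have h1 := BPoly_FE k n hk hkodd y
    have h2 : (EP n).eval (y + 1) + (EP n).eval y = 2 * y ^ n := by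
      rw [EP_eval, EP_eval]; exact Phi_FE n y
    simp only [hd, Polynomial.eval_sub]
    linarith
  have h2per : ∀ y : ℝ, d.eval (y + 2) = d.eval y := by
    intro y
    have e1 : y + 2 = (y + 1) + 1 := by ring
    rw [e1, hpt (y + 1), hpt y, neg_neg]
  have hroots : ∀ m : ℕ, d.eval (2 * m : ℝ) = d.eval 0 := by
    intro m
    induction m with
    | zero => norm_num
    | succ j ih =>
      have e1 : (2 * (j + 1 : ℕ) : ℝ) = (2 * j : ℝ) + 2 := by push_cast; ring
      rw [e1, h2per, ih]
  have hconst : d = Polynomial.C (d.eval 0) := by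
    have hq : d - Polynomial.C (d.eval 0) = 0 := by
      apply Polynomial.eq_zero_of_infinite_isRoot
      have hinj : Function.Injective (fun m : ℕ => (2 * m : ℝ)) := by
        intro m₁ m₂ hm
        simp only at hm
        exact_mod_cast mul_left_cancel₀ (two_ne_zero) hm
      refine (Set.infinite_range_of_injective hinj).mono ?_
      rintro _ ⟨m, rfl⟩
      simp only [Set.mem_setOf_eq, Polynomial.IsRoot.def, Polynomial.eval_sub,
        Polynomial.eval_C]
      rw [hroots m]
      ring
    have := sub_eq_zero.mp hq
    exact this
  have h0 : d.eval 0 = 0 := by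
    have hp := hpt 0
    rw [hconst] at hp
    simp at hp
    linarith [hp]
  have hd0 : d = 0 := by rw [hconst, h0, map_zero]
  have heval : d.eval x = 0 := by rw [hd0]; simp
  simp only [hd, Polynomial.eval_sub] at heval
  rw [BPoly_eval, EP_eval] at heval
  linarith

lemma neg_one_pow_mod (a b : ℕ) (hab : a % 2 = b % 2) : (-1 : ℝ) ^ a = (-1 : ℝ) ^ b := by
  rcases Nat.even_or_odd a with ha | ha
  · have hb : Even b := by
      rw [Nat.even_iff] at ha ⊢; omega
    rw [ha.neg_one_pow, hb.neg_one_pow]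
  · have hb : Odd b := by
      rw [Nat.odd_iff] at ha ⊢; omega
    rw [ha.neg_one_pow, hb.neg_one_pow]

lemma sign_eq (h k u : ℕ) (hh : Odd h) (hkodd : Odd k) :
    (-1 : ℝ) ^ ((u : ℤ) - (h * u / k : ℕ)) = (-1 : ℝ) ^ (h * u % k) := by
  have hne : (-1 : ℝ) ≠ 0 := by norm_num
  rw [zpow_sub₀ hne, zpow_natCast, zpow_natCast, div_eq_mul_inv, ← inv_pow, inv_neg, inv_one,
    ← pow_add]
  apply neg_one_pow_mod
  have hdm := Nat.div_add_mod (h * u) k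
  have e1 : (k * (h * u / k) + h * u % k) % 2 = (h * u) % 2 := by rw [hdm]
  have h2 : h % 2 = 1 := Nat.odd_iff.mp hh
  have k2 : k % 2 = 1 := Nat.odd_iff.mp hkodd
  have e2 : (h * u) % 2 = u % 2 := by
    rw [Nat.mul_mod, h2]; simp [Nat.mod_mod_of_dvd]
  have e3 : (k * (h * u / k)) % 2 = (h * u / k) % 2 := by
    rw [Nat.mul_mod, k2]; simp [Nat.mod_mod_of_dvd]
  rw [Nat.add_mod, e3, e2] at e1
  omega

lemma sum_bij_mod (h k : ℕ) (hk : 0 < k) (hcop : Nat.Coprime h k) (F : ℕ → ℝ) :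
    ∑ u ∈ range k, F (h * u % k) = ∑ v ∈ range k, F v := by
  have hmem : ∀ u ∈ range k, h * u % k ∈ range k := fun u _ =>
    Finset.mem_range.mpr (Nat.mod_lt _ hk)
  have hinj : ∀ u₁ ∈ range k, ∀ u₂ ∈ range k, h * u₁ % k = h * u₂ % k → u₁ = u₂ := by
    intro u₁ h₁ u₂ h₂ he
    have hmeq : u₁ ≡ u₂ [MOD k] := Nat.ModEq.cancel_left_of_coprime hcop.symm he
    have := hmeq
    unfold Nat.ModEq at this
    rw [Nat.mod_eq_of_lt (Finset.mem_range.mp h₁), Nat.mod_eq_of_lt (Finset.mem_range.mp h₂)]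
      at this
    exact this
  refine Finset.sum_bij (fun u _ => h * u % k) hmem (fun u₁ h₁ u₂ h₂ => hinj u₁ h₁ u₂ h₂) ?_
    (fun u _ => rfl)
  have := Finset.surj_on_of_inj_on_of_card_le (s := range k) (t := range k)
    (fun u _ => h * u % k) hmem (fun u₁ u₂ h₁ h₂ => hinj u₁ h₁ u₂ h₂) le_rfl
  intro b hb
  obtain ⟨a, ha, hab⟩ := this b hb
  exact ⟨a, ha, hab.symm⟩

lemma symm_final (p : ℕ) (y : ℝ) :
    ∑ l ∈ range (p + 1), (p.choose l : ℝ) * Ere l * y ^ l * Phi Ere (p - l) y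
      = ∑ s ∈ range (p + 1), (p.choose s : ℝ) * y ^ (p - s) * Ere s * Phi Ere (p - s) 1 := by
  have hL : ∀ l ∈ range (p + 1),
      (p.choose l : ℝ) * Ere l * y ^ l * Phi Ere (p - l) y
      = ∑ m ∈ range (p + 1),
          (p.choose l : ℝ) * ((p - l).choose m : ℝ) * Ere l * Ere m * y ^ (p - m) := by
    intro l hl
    have hlp : l ≤ p := Nat.lt_succ_iff.mp (Finset.mem_range.mp hl)
    unfold Phi
    rw [Finset.mul_sum]
    refine Finset.sum_subset (Finset.range_subset_range.mpr (Nat.succ_le_succ (Nat.sub_le p l))) ?_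
      |>.trans ?_
    · intro m hm hnm
      have : (p - l).choose m = 0 := by
        refine Nat.choose_eq_zero_of_lt ?_
        simp only [Finset.mem_range] at hm hnm
        omega
      simp [this]
    · refine Finset.sum_congr rfl fun m hm => ?_
      by_cases hml : m ≤ p - l
      · have hexp : y ^ l * y ^ (p - l - m) = y ^ (p - m) := by
          rw [← pow_add]; congr 1; omega
        calc (p.choose l : ℝ) * Ere l * y ^ l * (((p - l).choose m : ℝ) * Ere m * y ^ (p - l - m))
            = (p.choose l : ℝ) * ((p - l).choose m : ℝ) * Ere l * Ere m
              * (y ^ l * y ^ (p - l - m)) := by ring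
          _ = _ := by rw [hexp]
      · have : (p - l).choose m = 0 := Nat.choose_eq_zero_of_lt (by omega)
        simp [this]
  have hR : ∀ s ∈ range (p + 1),
      (p.choose s : ℝ) * y ^ (p - s) * Ere s * Phi Ere (p - s) 1
      = ∑ m ∈ range (p + 1),
          (p.choose s : ℝ) * ((p - s).choose m : ℝ) * Ere s * Ere m * y ^ (p - s) := by
    intro s hs
    unfold Phi
    rw [Finset.mul_sum]
    refine Finset.sum_subset (Finset.range_subset_range.mpr (Nat.succ_le_succ (Nat.sub_le p s))) ?_
      |>.trans ?_
    · intro m hm hnm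
      have : (p - s).choose m = 0 := by
        refine Nat.choose_eq_zero_of_lt ?_
        simp only [Finset.mem_range] at hm hnm
        omega
      simp [this]
    · refine Finset.sum_congr rfl fun m hm => ?_
      simp [one_pow]
      ring
  rw [Finset.sum_congr rfl hL, Finset.sum_congr rfl hR, Finset.sum_comm]
  refine Finset.sum_congr rfl fun s hs => ?_
  refine Finset.sum_congr rfl fun m hm => ?_
  have hsp : s ≤ p := Nat.lt_succ_iff.mp (Finset.mem_range.mp hs)
  have hmp : m ≤ p := Nat.lt_succ_iff.mp (Finset.mem_range.mp hm)
  have hc := choose_tri p m s hmp hsp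
  have hc' : (p.choose m : ℝ) * ((p - m).choose s : ℝ)
      = (p.choose s : ℝ) * ((p - s).choose m : ℝ) := by exact_mod_cast hc
  linear_combination (Ere m * Ere s * y ^ (p - s)) * hc'

/-- Theorem 7: for coprime odd positive `h, k` and `p ≥ 1`,
`k^p ∑_{u=0}^{k−1} (−1)^{u−⌊hu/k⌋} ∑_{s=0}^{p} C(p,s) h^s E_s(u/k) E_{p−s}(h − ⌊hu/k⌋)
  = ∑_{s=0}^{p} C(p,s) (hk)^{p−s} E_s E_{p−s}(1)`. -/
theorem dcSum_aux_identity (h k p : ℕ) (hh : 0 < h) (hk : 0 < k)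
    (hhodd : Odd h) (hkodd : Odd k) (hcop : Nat.Coprime h k) (hp : 1 ≤ p) :
    (k : ℝ) ^ p *
        ∑ u ∈ Finset.range k,
          (-1 : ℝ) ^ ((u : ℤ) - (h * u / k : ℕ)) *
            ∑ s ∈ Finset.range (p + 1),
              (p.choose s : ℝ) * (h : ℝ) ^ s * eulerPoly s ((u : ℝ) / k) *
                eulerPoly (p - s) ((h : ℝ) - (h * u / k : ℕ)) =
      ∑ s ∈ Finset.range (p + 1),
        (p.choose s : ℝ) * ((h : ℝ) * k) ^ (p - s) * (eulerNumber s : ℝ) *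
          eulerPoly (p - s) 1 := by
  classical
  have hk0 : (k : ℝ) ≠ 0 := Nat.cast_ne_zero.mpr hk.ne'
  have hh0 : (h : ℝ) ≠ 0 := Nat.cast_ne_zero.mpr hh.ne'
  have hhk0 : (h : ℝ) * (k : ℝ) ≠ 0 := mul_ne_zero hh0 hk0
  set a : ℕ → ℝ := fun l => Ere l * ((h : ℝ) * (k : ℝ)) ^ l with ha
  set b : ℕ → ℝ := fun m => Ere m * (k : ℝ) ^ m with hb
  set Psi : ℕ → ℝ := fun v => ∑ l ∈ range (p + 1),
      (p.choose l : ℝ) * a l * Phi b (p - l) ((k : ℝ) * (h : ℝ) + (v : ℝ)) with hPsi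
  rw [Finset.mul_sum]
  have step1 : ∀ u ∈ range k,
      (k : ℝ) ^ p * ((-1 : ℝ) ^ ((u : ℤ) - (h * u / k : ℕ)) *
          ∑ s ∈ range (p + 1),
            (p.choose s : ℝ) * (h : ℝ) ^ s * eulerPoly s ((u : ℝ) / k) *
              eulerPoly (p - s) ((h : ℝ) - (h * u / k : ℕ)))
      = (-1 : ℝ) ^ (h * u % k) * Psi (h * u % k) := by
    intro u hu
    rw [sign_eq h k u hhodd hkodd]
    rw [mul_left_comm]
    congr 1
    have inner1 : (k : ℝ) ^ p *
        ∑ s ∈ range (p + 1),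
          (p.choose s : ℝ) * (h : ℝ) ^ s * eulerPoly s ((u : ℝ) / k) *
            eulerPoly (p - s) ((h : ℝ) - (h * u / k : ℕ))
        = ∑ s ∈ range (p + 1), (p.choose s : ℝ) * Phi a s ((h : ℝ) * (u : ℝ))
            * Phi b (p - s) ((k : ℝ) * ((h : ℝ) - ((h * u / k : ℕ) : ℝ))) := by
      rw [Finset.mul_sum]
      refine Finset.sum_congr rfl fun s hs => ?_
      have hsp : s ≤ p := Nat.lt_succ_iff.mp (Finset.mem_range.mp hs)
      have e1 : Phi a s ((h : ℝ) * (u : ℝ))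
          = ((h : ℝ) * (k : ℝ)) ^ s * Phi Ere s ((u : ℝ) / (k : ℝ)) := by
        rw [ha, ← Phi_scale Ere s hhk0 ((h : ℝ) * (u : ℝ))]
        congr 1
        rw [mul_div_mul_left _ _ hh0]
      have e2 : Phi b (p - s) ((k : ℝ) * ((h : ℝ) - ((h * u / k : ℕ) : ℝ)))
          = (k : ℝ) ^ (p - s) * Phi Ere (p - s) ((h : ℝ) - ((h * u / k : ℕ) : ℝ)) := by
        rw [hb, ← Phi_scale Ere (p - s) hk0]
        congr 1
        rw [mul_div_cancel_left₀ _ hk0]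
      rw [e1, e2, eulerPoly_eq_Phi, eulerPoly_eq_Phi]
      have hksplit : (k : ℝ) ^ p = (k : ℝ) ^ s * (k : ℝ) ^ (p - s) := by
        rw [← pow_add]
        congr 1
        omega
      rw [hksplit]
      ring
    rw [inner1, appell_conv p a b]
    have harg : (h : ℝ) * (u : ℝ) + (k : ℝ) * ((h : ℝ) - ((h * u / k : ℕ) : ℝ))
        = (k : ℝ) * (h : ℝ) + ((h * u % k : ℕ) : ℝ) := by
      have hdm := Nat.div_add_mod (h * u) k
      have hdm' : ((k * (h * u / k) + h * u % k : ℕ) : ℝ) = ((h * u : ℕ) : ℝ) := by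
        exact_mod_cast congrArg (fun t : ℕ => (t : ℝ)) hdm
      push_cast at hdm'
      linarith
    rw [harg, hPsi]
  rw [Finset.sum_congr rfl step1]
  rw [sum_bij_mod h k hk hcop (fun v => (-1 : ℝ) ^ v * Psi v)]
  have swap : ∑ v ∈ range k, (-1 : ℝ) ^ v * Psi v
      = ∑ l ∈ range (p + 1), (p.choose l : ℝ) * a l *
          ∑ v ∈ range k, (-1 : ℝ) ^ v *
            ((k : ℝ) ^ (p - l) * Phi Ere (p - l) (((k : ℝ) * (h : ℝ) + (v : ℝ)) / (k : ℝ))) := by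
    simp only [hPsi, Finset.mul_sum]
    rw [Finset.sum_comm]
    refine Finset.sum_congr rfl fun l hl => ?_
    refine Finset.sum_congr rfl fun v hv => ?_
    have e3 : Phi b (p - l) ((k : ℝ) * (h : ℝ) + (v : ℝ))
        = (k : ℝ) ^ (p - l) * Phi Ere (p - l) (((k : ℝ) * (h : ℝ) + (v : ℝ)) / (k : ℝ)) := by
      rw [hb, ← Phi_scale Ere (p - l) hk0]
    rw [e3]
    ring
  rw [swap]
  have hmt : ∀ l ∈ range (p + 1),
      (p.choose l : ℝ) * a l *
          ∑ v ∈ range k, (-1 : ℝ) ^ v *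
            ((k : ℝ) ^ (p - l) * Phi Ere (p - l) (((k : ℝ) * (h : ℝ) + (v : ℝ)) / (k : ℝ)))
      = (p.choose l : ℝ) * Ere l * ((h : ℝ) * (k : ℝ)) ^ l
          * Phi Ere (p - l) ((h : ℝ) * (k : ℝ)) := by
    intro l hl
    rw [mult_thm k (p - l) hk hkodd ((k : ℝ) * (h : ℝ))]
    rw [ha]
    rw [show (k : ℝ) * (h : ℝ) = (h : ℝ) * (k : ℝ) from mul_comm _ _]
    ring
  rw [Finset.sum_congr rfl hmt, symm_final p ((h : ℝ) * (k : ℝ))]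
  rfl
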